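/- For real q with 0 < q < 1, x1, x2 in [0,1], natural n >= 1 and 0 <= k <= n-1, we have ((n-k)/n) * B_{k,n}(x1,x2|q) + ((k+1)/n) * B_{k+1,n}(x1,x2|q) = (1 + [x1]_q - [x2]_q) * B_{k,n-1}(x1,x2|q). -/

import Mathlib

noncomputable def qNum (q x : ℝ) : ℝ := (1 - q ^ x) / (1 - q)

noncomputable def qBern (q : ℝ) (k n : ℕ) (x1 x2 : ℝ) : ℝ :=
  (n.choose k : ℝ) * (qNum q x1) ^ k * (qNum q⁻¹ (1 - x2)) ^ (n - k)

lemma qNum_compl (q : ℝ) (hq0 : 0 < q) (hq1 : q < 1) (x : ℝ) :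
    qNum q⁻¹ (1 - x) = 1 - qNum q x := by
  have hqne : q ≠ 0 := ne_of_gt hq0
  have h1q : (1 : ℝ) - q ≠ 0 := by linarith
  have hinv : q⁻¹ ^ (1 - x) = q ^ x / q := by
    rw [Real.inv_rpow hq0.le, ← Real.rpow_neg hq0.le, show -(1 - x) = x - 1 by ring,
      Real.rpow_sub hq0, Real.rpow_one]
  have hinvne : (1 : ℝ) - q⁻¹ ≠ 0 := by
    intro h
    have hq' : q⁻¹ = 1 := by linarith
    have : q = 1 := by field_simp at hq'; linarith
    linarith
  unfold qNum
  rw [hinv]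
  have hR : 1 - (1 - q ^ x) / (1 - q) = (q ^ x - q) / (1 - q) := by field_simp; ring
  have hL : (1 - q ^ x / q) / (1 - q⁻¹) = (q ^ x - q) / (1 - q) := by
    rw [div_eq_div_iff hinvne h1q]
    field_simp
    ring
  rw [hL, hR]

lemma key_alg (a b : ℝ) (m k : ℕ) (hk : k ≤ m) :
    (((m : ℝ) + 1 - k) / (m + 1)) * (((m + 1).choose k : ℝ) * a ^ k * b ^ (m + 1 - k))
      + (((k : ℝ) + 1) / (m + 1)) * (((m + 1).choose (k + 1) : ℝ) * a ^ (k + 1) * b ^ (m - k))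
      = (a + b) * ((m.choose k : ℝ) * a ^ k * b ^ (m - k)) := by
  have h1n : ((m + 1).choose (k + 1) : ℕ) * (k + 1) = (m + 1).choose k * (m + 1 - k) :=
    Nat.choose_succ_right_eq (m + 1) k
  have h2n : (m + 1) * m.choose k = (m + 1).choose (k + 1) * (k + 1) :=
    Nat.add_one_mul_choose_eq m k
  have h1 : (((m + 1).choose (k + 1) : ℝ)) * ((k : ℝ) + 1) = ((m + 1).choose k : ℝ) * ((m : ℝ) + 1 - k) := by
    have := congrArg (Nat.cast : ℕ → ℝ) h1n
    push_cast [Nat.sub_add_cancel, Nat.succ_sub (hk.trans (Nat.le_succ m))] at this ⊢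
    rw [this]
    have : ((m + 1 - k : ℕ) : ℝ) = (m : ℝ) + 1 - k := by
      have : k ≤ m + 1 := hk.trans (Nat.le_succ m)
      push_cast [this]
      ring
    rw [this]
  have h2 : ((m : ℝ) + 1) * (m.choose k : ℝ) = ((m + 1).choose (k + 1) : ℝ) * ((k : ℝ) + 1) := by
    exact_mod_cast congrArg (Nat.cast : ℕ → ℝ) h2n
  have hb : b ^ (m + 1 - k) = b ^ (m - k) * b := by
    rw [Nat.succ_sub hk, pow_succ]
  have hm1 : ((m : ℝ) + 1) ≠ 0 := by positivity
  rw [hb]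
  field_simp
  linear_combination (-(a ^ k * b ^ (m - k) * b)) * h1
    - (a ^ k * b ^ (m - k) * b + a ^ (k + 1) * b ^ (m - k)) * h2

theorem qBern_three_term (q : ℝ) (hq0 : 0 < q) (hq1 : q < 1)
    (x1 x2 : ℝ) (hx1 : x1 ∈ Set.Icc (0:ℝ) 1) (hx2 : x2 ∈ Set.Icc (0:ℝ) 1)
    (n k : ℕ) (hn : 1 ≤ n) (hk : k ≤ n - 1) :
    (((n : ℝ) - k) / n) * qBern q k n x1 x2 + (((k : ℝ) + 1) / n) * qBern q (k + 1) n x1 x2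
      = (1 + qNum q x1 - qNum q x2) * qBern q k (n - 1) x1 x2 := by
  obtain ⟨m, rfl⟩ : ∃ m, n = m + 1 := ⟨n - 1, (Nat.succ_pred_eq_of_pos hn).symm⟩
  simp only [Nat.add_sub_cancel] at hk ⊢
  unfold qBern
  set a := qNum q x1 with ha
  have hab : 1 + a - qNum q x2 = a + qNum q⁻¹ (1 - x2) := by
    rw [qNum_compl q hq0 hq1]; ring
  rw [hab]
  set b := qNum q⁻¹ (1 - x2) with hbdef
  have := key_alg a b m k hk
  push_cast at this ⊢
  linarith [this]
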